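/- Let w be a word over {a^{±1}, t^{±1}} and define α recursively by α(ε) = 0, α(w·t^{±1}) = α(w), α(w·a) = α(w) + (2/3)^{β(w)}, α(w·a⁻¹) = α(w) − (2/3)^{β(w)}, where β(w) = |w|_t − |w|_{t⁻¹}. Then any two words representing the same element of BS(2,3) = ⟨a, t | t⁻¹ a² t = a³⟩ have equal α-values; in particular the defining relator t⁻¹a²t a⁻³ satisfies α(w · t⁻¹a²ta⁻³) = α(w) for all words w. -/
import Mathlib


/-- One step of the simultaneous recursion computing `(α(w), β(w))`, reading one
letter of a word over `{a^{±1}, t^{±1}}` (letter `(0, true)` is `a`, `(0, false)` is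
`a⁻¹`, `(1, true)` is `t`, `(1, false)` is `t⁻¹`):
`α(w·t^{±1}) = α(w)`, `α(w·a^{±1}) = α(w) ± (2/3)^{β(w)}`,
`β(w·a^{±1}) = β(w)`, `β(w·t^{±1}) = β(w) ± 1`. -/
noncomputable def alphaBetaStep (s : ℝ × ℤ) (ℓ : Fin 2 × Bool) : ℝ × ℤ :=
  if ℓ.1 = 0 then
    (if ℓ.2 then (s.1 + (2/3 : ℝ) ^ s.2, s.2) else (s.1 - (2/3 : ℝ) ^ s.2, s.2))
  else
    (if ℓ.2 then (s.1, s.2 + 1) else (s.1, s.2 - 1))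

/-- `α(w)` for a word `w` over `{a^{±1}, t^{±1}}`, with `α(ε) = 0` and `β(ε) = 0`. -/
noncomputable def alphaWord (w : List (Fin 2 × Bool)) : ℝ :=
  (w.foldl alphaBetaStep (0, 0)).1

/-- Relator of `BS(2,3) = ⟨a, t | t⁻¹ a² t = a³⟩` (generator `0` is `a`, `1` is `t`). -/
def bs23Rels : Set (FreeGroup (Fin 2)) :=
  {(FreeGroup.of 1)⁻¹ * FreeGroup.of 0 ^ 2 * FreeGroup.of 1 * (FreeGroup.of 0 ^ 3)⁻¹}

/-- The defining relator `t⁻¹ a² t a⁻³` as a word. -/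
def relatorWord : List (Fin 2 × Bool) :=
  [(1, false), (0, true), (0, true), (1, true), (0, false), (0, false), (0, false)]

/-- Each letter acts as a bijection on states `(α, β)`. -/
noncomputable def stepEquiv (ℓ : Fin 2 × Bool) : Equiv.Perm (ℝ × ℤ) where
  toFun s := alphaBetaStep s ℓ
  invFun s := alphaBetaStep s (ℓ.1, !ℓ.2)
  left_inv s := by
    obtain ⟨i, b⟩ := ℓ
    by_cases hi : i = 0 <;> cases b <;> simp [alphaBetaStep, hi]
  right_inv s := by
    obtain ⟨i, b⟩ := ℓ
    by_cases hi : i = 0 <;> cases b <;> simp [alphaBetaStep, hi]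

lemma stepEquiv_inv (ℓ : Fin 2 × Bool) : (stepEquiv ℓ)⁻¹ = stepEquiv (ℓ.1, !ℓ.2) := by
  obtain ⟨i, b⟩ := ℓ
  exact Equiv.ext fun s => rfl

/-- The anti-homomorphism value on generators, packaged in the opposite group. -/
noncomputable def phi : FreeGroup (Fin 2) →* (Equiv.Perm (ℝ × ℤ))ᵐᵒᵖ :=
  FreeGroup.lift fun i => MulOpposite.op (stepEquiv (i, true))

lemma phi_mk_single (ℓ : Fin 2 × Bool) :
    (phi (FreeGroup.mk [ℓ])).unop = stepEquiv ℓ := by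
  obtain ⟨i, b⟩ := ℓ
  cases b
  · have : FreeGroup.mk [(i, false)] = (FreeGroup.of i)⁻¹ := by
      rw [show FreeGroup.of i = FreeGroup.mk [(i, true)] from rfl, FreeGroup.inv_mk]; rfl
    rw [this, map_inv]
    simp [phi, FreeGroup.lift_apply_of, stepEquiv_inv]
  · have : FreeGroup.mk [(i, true)] = FreeGroup.of i := rfl
    rw [this]
    simp [phi, FreeGroup.lift_apply_of]

lemma foldl_eq_phi (w : List (Fin 2 × Bool)) (s : ℝ × ℤ) :
    w.foldl alphaBetaStep s = (phi (FreeGroup.mk w)).unop s := by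
  induction w generalizing s with
  | nil =>
      have : FreeGroup.mk ([] : List (Fin 2 × Bool)) = 1 := rfl
      simp [this]
  | cons ℓ w ih =>
      have hmk : FreeGroup.mk (ℓ :: w) = FreeGroup.mk [ℓ] * FreeGroup.mk w := by
        rw [FreeGroup.mul_mk]; rfl
      rw [List.foldl_cons, ih, hmk, map_mul]
      simp [phi_mk_single]
      rfl

lemma relator_foldl (s : ℝ × ℤ) : relatorWord.foldl alphaBetaStep s = s := by
  obtain ⟨x, n⟩ := s
  simp only [relatorWord, List.foldl_cons, List.foldl_nil, alphaBetaStep]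
  norm_num
  have h : (2/3 : ℝ) ^ (n - 1) = (2/3 : ℝ) ^ n * (3/2 : ℝ) := by
    rw [zpow_sub₀ (by norm_num : (2/3 : ℝ) ≠ 0), zpow_one]
    ring
  rw [h]; ring

lemma relator_eq_mk :
    (FreeGroup.of 1)⁻¹ * FreeGroup.of 0 ^ 2 * FreeGroup.of 1 * (FreeGroup.of 0 ^ 3)⁻¹
      = FreeGroup.mk relatorWord := by
  have h0 : FreeGroup.of (0 : Fin 2) = FreeGroup.mk [((0 : Fin 2), true)] := rfl
  have h1 : FreeGroup.of (1 : Fin 2) = FreeGroup.mk [((1 : Fin 2), true)] := rfl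
  rw [h0, h1]
  simp only [pow_succ, pow_zero, one_mul, FreeGroup.mul_mk, FreeGroup.inv_mk,
    FreeGroup.mul_mk]
  rfl

lemma phi_rels : ∀ r ∈ bs23Rels, phi r = 1 := by
  intro r hr
  rw [Set.mem_singleton_iff.mp hr, relator_eq_mk]
  have : ∀ s, (phi (FreeGroup.mk relatorWord)).unop s = s := fun s => by
    rw [← foldl_eq_phi, relator_foldl]
  apply MulOpposite.unop_injective
  exact Equiv.ext this

theorem alpha_descends_to_BS23 :
    (∀ w₁ w₂ : List (Fin 2 × Bool),
      (QuotientGroup.mk (FreeGroup.mk w₁) : PresentedGroup bs23Rels) =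
        QuotientGroup.mk (FreeGroup.mk w₂) →
      alphaWord w₁ = alphaWord w₂) ∧
    (∀ w : List (Fin 2 × Bool), alphaWord (w ++ relatorWord) = alphaWord w) := by
  constructor
  · intro w₁ w₂ h
    have hΦ := congrArg (PresentedGroup.toGroup phi_rels) h
    have key : phi (FreeGroup.mk w₁) = phi (FreeGroup.mk w₂) := hΦ
    unfold alphaWord
    rw [foldl_eq_phi, foldl_eq_phi, key]
  · intro w
    unfold alphaWord
    rw [List.foldl_append, relator_foldl]
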